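/- Let M be a real symmetric n×n matrix (n ≥ 2) whose top eigenvalue is simple with gap λ_1(M) − λ_2(M) ≥ γ for some γ > 0, and let v_1 be a unit eigenvector of M for λ_1(M). Let M' be any real symmetric n×n matrix and let v_1' be any unit eigenvector of M' associated with its largest eigenvalue λ_1(M'). Then ‖v_1 v_1^⊤ − v_1' (v_1')^⊤‖ ≤ 2‖M − M'‖ / γ. -/

import Mathlib

open Matrix MeasureTheory ProbabilityTheory BigOperators
open scoped RealInnerProductSpace

/-- Operator norm (induced by the Euclidean norm) of a real square matrix. -/
noncomputable def opNorm {n : ℕ} (M : Matrix (Fin n) (Fin n) ℝ) : ℝ :=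
  ‖Matrix.toEuclideanCLM (𝕜 := ℝ) M‖

/-- `eigDesc hM j` is the `(j+1)`-st largest eigenvalue of the symmetric matrix `M`
(0-indexed: `eigDesc hM 0 = λ₁(M)`), and `0` for out-of-range indices. -/
noncomputable def eigDesc {n : ℕ} {M : Matrix (Fin n) (Fin n) ℝ} (hM : M.IsHermitian) (j : ℕ) : ℝ :=
  if h : j < n then (hM.eigenvalues ∘ Tuple.sort hM.eigenvalues) (Fin.rev ⟨j, h⟩) else 0

/-- The `k`-th eigengap `gap_k(M) = min (λ_k − λ_{k+1}, λ_{k−1} − λ_k)` (1-indexed),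
with the convention that the second term is `+∞` (hence dropped) when `k = 1`. -/
noncomputable def eigGap {n : ℕ} {M : Matrix (Fin n) (Fin n) ℝ} (hM : M.IsHermitian) (k : ℕ) : ℝ :=
  if k = 1 then eigDesc hM (k - 1) - eigDesc hM k
  else min (eigDesc hM (k - 1) - eigDesc hM k) (eigDesc hM (k - 2) - eigDesc hM (k - 1))

/-- `topProj hM k` : the orthogonal projection onto the span of the (chosen) eigenvectors
of `M` associated with its `k` largest eigenvalues. -/
noncomputable def topProj {n : ℕ} {M : Matrix (Fin n) (Fin n) ℝ} (hM : M.IsHermitian) (k : ℕ) :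
    Matrix (Fin n) (Fin n) ℝ :=
  ∑ j ∈ Finset.univ.filter (fun j : Fin n => (j : ℕ) < k),
    Matrix.vecMulVec
      (fun i => (hM.eigenvectorUnitary : Matrix (Fin n) (Fin n) ℝ) i (Tuple.sort hM.eigenvalues j.rev))
      (fun i => (hM.eigenvectorUnitary : Matrix (Fin n) (Fin n) ℝ) i (Tuple.sort hM.eigenvalues j.rev))

/-- `Q` is the orthogonal projection onto a `k`-dimensional invariant subspace of `M`
spanned by eigenvectors associated with its `k` largest eigenvalues. -/
def IsTopKEigenProj {n : ℕ} (k : ℕ) {M : Matrix (Fin n) (Fin n) ℝ} (hM : M.IsHermitian)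
    (Q : Matrix (Fin n) (Fin n) ℝ) : Prop :=
  ∃ v : Fin k → (Fin n → ℝ),
    (∀ a b : Fin k, v a ⬝ᵥ v b = if a = b then (1:ℝ) else 0) ∧
    (∀ j : Fin k, M *ᵥ v j = eigDesc hM (j : ℕ) • v j) ∧
    Q = ∑ j : Fin k, Matrix.vecMulVec (v j) (v j)


noncomputable def toEu {n : ℕ} (x : Fin n → ℝ) : EuclideanSpace ℝ (Fin n) :=
  (WithLp.equiv 2 _).symm x

lemma inner_toEu {n : ℕ} (x y : Fin n → ℝ) : ⟪toEu x, toEu y⟫ = x ⬝ᵥ y := by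
  simp [toEu, PiLp.inner_apply, RCLike.inner_apply, dotProduct]
  exact Finset.sum_congr rfl fun i _ => mul_comm _ _

lemma normsq_toEu {n : ℕ} (x : Fin n → ℝ) : ‖toEu x‖ ^ 2 = x ⬝ᵥ x := by
  rw [← real_inner_self_eq_norm_sq, inner_toEu]

lemma toEu_smul {n : ℕ} (c : ℝ) (x : Fin n → ℝ) : toEu (c • x) = c • toEu x := rfl

lemma clm_apply {n : ℕ} (A : Matrix (Fin n) (Fin n) ℝ) (x : Fin n → ℝ) :
    Matrix.toEuclideanCLM (𝕜 := ℝ) A (toEu x) = toEu (A *ᵥ x) :=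
  Matrix.toEuclideanCLM_toLp A x

lemma vecMulVec_mulVec' {n : ℕ} (v w x : Fin n → ℝ) :
    Matrix.vecMulVec v w *ᵥ x = (w ⬝ᵥ x) • v := by
  funext i
  simp only [Matrix.vecMulVec_apply, Matrix.mulVec, dotProduct, Pi.smul_apply,
    smul_eq_mul, Finset.mul_sum]
  rw [Finset.sum_mul]
  exact Finset.sum_congr rfl fun j _ => by ring

lemma opNorm_mulVec_le {n : ℕ} (A : Matrix (Fin n) (Fin n) ℝ) (x : Fin n → ℝ) :
    ‖toEu (A *ᵥ x)‖ ≤ opNorm A * ‖toEu x‖ := by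
  rw [← clm_apply]; exact (Matrix.toEuclideanCLM (𝕜 := ℝ) A).le_opNorm _

lemma opNorm_le_of {n : ℕ} (A : Matrix (Fin n) (Fin n) ℝ) {C : ℝ} (hC : 0 ≤ C)
    (h : ∀ x : Fin n → ℝ, ‖toEu (A *ᵥ x)‖ ≤ C * ‖toEu x‖) : opNorm A ≤ C := by
  refine ContinuousLinearMap.opNorm_le_bound _ hC fun x => ?_
  have hx : toEu (WithLp.equiv 2 (Fin n → ℝ) x) = x := rfl
  have := h (WithLp.equiv 2 _ x)
  rwa [← hx, ← clm_apply] at this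

lemma inner_clm_symm {n : ℕ} {M : Matrix (Fin n) (Fin n) ℝ} (hM : M.IsHermitian)
    (y z : EuclideanSpace ℝ (Fin n)) :
    ⟪Matrix.toEuclideanCLM (𝕜 := ℝ) M y, z⟫ = ⟪y, Matrix.toEuclideanCLM (𝕜 := ℝ) M z⟫ := by
  have e : ∀ w, Matrix.toEuclideanCLM (𝕜 := ℝ) M w = Matrix.toEuclideanLin M w := fun w => by
    rw [← Matrix.coe_toEuclideanCLM_eq_toEuclideanLin]; rfl
  rw [e, e]
  exact (Matrix.isHermitian_iff_isSymmetric.1 hM) y z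

lemma clm_eigenvectorBasis {n : ℕ} {M : Matrix (Fin n) (Fin n) ℝ} (hM : M.IsHermitian) (i : Fin n) :
    Matrix.toEuclideanCLM (𝕜 := ℝ) M (hM.eigenvectorBasis i)
      = hM.eigenvalues i • hM.eigenvectorBasis i := by
  have h := hM.mulVec_eigenvectorBasis i
  have : toEu (M *ᵥ ⇑(hM.eigenvectorBasis i)) = toEu (hM.eigenvalues i • ⇑(hM.eigenvectorBasis i)) := by
    rw [h]
  rw [← clm_apply] at this
  exact this

lemma parseval' {n : ℕ} (b : OrthonormalBasis (Fin n) ℝ (EuclideanSpace ℝ (Fin n)))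
    (x : EuclideanSpace ℝ (Fin n)) : ⟪x, x⟫ = ∑ i, ⟪b i, x⟫ ^ 2 := by
  rw [← OrthonormalBasis.sum_inner_mul_inner b x x]
  exact Finset.sum_congr rfl fun i _ => by rw [real_inner_comm x (b i)]; ring

lemma rayleigh' {n : ℕ} {M : Matrix (Fin n) (Fin n) ℝ} (hM : M.IsHermitian)
    (x : EuclideanSpace ℝ (Fin n)) :
    ⟪x, Matrix.toEuclideanCLM (𝕜 := ℝ) M x⟫
      = ∑ i, hM.eigenvalues i * ⟪hM.eigenvectorBasis i, x⟫ ^ 2 := by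
  rw [← OrthonormalBasis.sum_inner_mul_inner hM.eigenvectorBasis x _]
  refine Finset.sum_congr rfl fun i _ => ?_
  rw [← inner_clm_symm hM, clm_eigenvectorBasis hM i, real_inner_smul_left,
    real_inner_comm x (hM.eigenvectorBasis i)]
  ring

lemma eigDesc_eq {n : ℕ} {M : Matrix (Fin n) (Fin n) ℝ} (hM : M.IsHermitian) {j : ℕ}
    (hj : j < n) : eigDesc hM j
      = hM.eigenvalues (Tuple.sort hM.eigenvalues (Fin.rev ⟨j, hj⟩)) := by
  rw [eigDesc, dif_pos hj]; rfl

lemma eigenvalues_le_eigDesc_zero {n : ℕ} (hn : 0 < n) {M : Matrix (Fin n) (Fin n) ℝ}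
    (hM : M.IsHermitian) (i : Fin n) : hM.eigenvalues i ≤ eigDesc hM 0 := by
  rw [eigDesc_eq hM hn]
  have h1 : hM.eigenvalues i
      = (hM.eigenvalues ∘ Tuple.sort hM.eigenvalues) ((Tuple.sort hM.eigenvalues).symm i) := by
    simp
  rw [h1]
  exact Tuple.monotone_sort hM.eigenvalues (by
    rw [Fin.le_def, Fin.val_rev]
    simp only [Fin.val_mk]
    omega)

lemma eigenvalues_le_eigDesc_one {n : ℕ} (hn : 2 ≤ n) {M : Matrix (Fin n) (Fin n) ℝ}
    (hM : M.IsHermitian) (i : Fin n)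
    (hi : i ≠ Tuple.sort hM.eigenvalues (Fin.rev ⟨0, by omega⟩)) :
    hM.eigenvalues i ≤ eigDesc hM 1 := by
  rw [eigDesc_eq hM (by omega : 1 < n)]
  have h1 : hM.eigenvalues i
      = (hM.eigenvalues ∘ Tuple.sort hM.eigenvalues) ((Tuple.sort hM.eigenvalues).symm i) := by
    simp
  rw [h1]
  refine Tuple.monotone_sort hM.eigenvalues ?_
  rw [Fin.le_def, Fin.val_rev]
  have h2 : ((Tuple.sort hM.eigenvalues).symm i : Fin n) ≠ Fin.rev ⟨0, by omega⟩ := by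
    intro h
    apply hi
    rw [← h]
    simp
  have h3 : ((Tuple.sort hM.eigenvalues).symm i : Fin n).val ≠ n - 1 := by
    intro h
    apply h2
    apply Fin.ext
    rw [Fin.val_rev]
    simp only [Fin.val_mk]
    omega
  have h4 := ((Tuple.sort hM.eigenvalues).symm i : Fin n).isLt
  have h5 : ((Tuple.sort hM.eigenvalues).symm i : Fin n).val ≤ n - 1 - 1 := by omega
  exact h5

lemma rayleigh_le_max {n : ℕ} (hn : 0 < n) {M : Matrix (Fin n) (Fin n) ℝ}
    (hM : M.IsHermitian) (x : Fin n → ℝ) :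
    x ⬝ᵥ (M *ᵥ x) ≤ eigDesc hM 0 * (x ⬝ᵥ x) := by
  have hr := rayleigh' hM (toEu x)
  rw [clm_apply, inner_toEu] at hr
  have hx : x ⬝ᵥ x = ∑ i, ⟪hM.eigenvectorBasis i, toEu x⟫ ^ 2 := by
    rw [← inner_toEu, parseval' hM.eigenvectorBasis]
  rw [hr, hx, Finset.mul_sum]
  exact Finset.sum_le_sum fun i _ =>
    mul_le_mul_of_nonneg_right (eigenvalues_le_eigDesc_zero hn hM i) (sq_nonneg _)

lemma rayleigh_le_second {n : ℕ} (hn : 2 ≤ n) {M : Matrix (Fin n) (Fin n) ℝ}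
    (hM : M.IsHermitian) (hgap : eigDesc hM 1 < eigDesc hM 0)
    {v1 : Fin n → ℝ} (hv1unit : v1 ⬝ᵥ v1 = 1) (hv1eig : M *ᵥ v1 = eigDesc hM 0 • v1)
    (x : Fin n → ℝ) (hx : v1 ⬝ᵥ x = 0) :
    x ⬝ᵥ (M *ᵥ x) ≤ eigDesc hM 1 * (x ⬝ᵥ x) := by
  set b := hM.eigenvectorBasis with hb
  set i0 : Fin n := Tuple.sort hM.eigenvalues (Fin.rev ⟨0, by omega⟩) with hi0
  -- coefficients of v1 on non-top eigenvectors vanish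
  have hc : ∀ i : Fin n, i ≠ i0 → ⟪b i, toEu v1⟫ = 0 := by
    intro i hi
    have h1 : ⟪b i, Matrix.toEuclideanCLM (𝕜 := ℝ) M (toEu v1)⟫
        = eigDesc hM 0 * ⟪b i, toEu v1⟫ := by
      rw [clm_apply, hv1eig, toEu_smul, real_inner_smul_right]
    have h2 : ⟪b i, Matrix.toEuclideanCLM (𝕜 := ℝ) M (toEu v1)⟫
        = hM.eigenvalues i * ⟪b i, toEu v1⟫ := by
      rw [← inner_clm_symm hM, clm_eigenvectorBasis hM i, real_inner_smul_left]
    have h3 : hM.eigenvalues i ≤ eigDesc hM 1 := eigenvalues_le_eigDesc_one hn hM i hi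
    have h4 : (eigDesc hM 0 - hM.eigenvalues i) * ⟪b i, toEu v1⟫ = 0 := by
      rw [sub_mul, h1.symm.trans h2]
      ring
    have h5 : eigDesc hM 0 - hM.eigenvalues i ≠ 0 := by nlinarith
    exact (mul_eq_zero.1 h4).resolve_left h5
  -- the top coefficient of v1 is nonzero
  have hpars : (1 : ℝ) = ∑ i, ⟪b i, toEu v1⟫ ^ 2 := by
    rw [← hv1unit, ← inner_toEu, parseval' b]
  have hsum : ∑ i, ⟪b i, toEu v1⟫ ^ 2 = ⟪b i0, toEu v1⟫ ^ 2 := by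
    refine Finset.sum_eq_single i0 (fun i _ hi => by rw [hc i hi]; ring) (by simp)
  have hc0 : ⟪b i0, toEu v1⟫ ≠ 0 := by
    intro h
    rw [hsum, h] at hpars
    norm_num at hpars
  -- x is orthogonal to the top eigenvector
  have hb0x : ⟪b i0, toEu x⟫ = 0 := by
    have h := OrthonormalBasis.sum_inner_mul_inner b (toEu x) (toEu v1)
    rw [inner_toEu, dotProduct_comm, hx] at h
    rw [Finset.sum_eq_single i0 (fun i _ hi => by rw [hc i hi]; ring) (by simp)] at h
    have := mul_eq_zero.1 h
    rcases this with h' | h'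
    · rw [real_inner_comm] at h'; exact h'
    · exact absurd h' hc0
  -- conclude via the Rayleigh expansion
  have hr := rayleigh' hM (toEu x)
  rw [clm_apply, inner_toEu] at hr
  have hxx : x ⬝ᵥ x = ∑ i, ⟪b i, toEu x⟫ ^ 2 := by
    rw [← inner_toEu, parseval' b]
  rw [hr, hxx, Finset.mul_sum]
  refine Finset.sum_le_sum fun i _ => ?_
  by_cases hi : i = i0
  · subst hi; rw [hb0x]; simp
  · exact mul_le_mul_of_nonneg_right (eigenvalues_le_eigDesc_one hn hM i hi) (sq_nonneg _)

set_option maxHeartbeats 1000000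

/-- Davis–Kahan bound for the rank-one spectral projector of the
top eigenvector, under a top eigengap `γ`. -/
theorem stmt_8 {n : ℕ} (hn : 2 ≤ n)
    {M M' : Matrix (Fin n) (Fin n) ℝ} (hM : M.IsHermitian) (hM' : M'.IsHermitian)
    {γ : ℝ} (hγ : 0 < γ) (hgap : γ ≤ eigDesc hM 0 - eigDesc hM 1)
    (v1 v1' : Fin n → ℝ)
    (hv1unit : v1 ⬝ᵥ v1 = 1) (hv1eig : M *ᵥ v1 = eigDesc hM 0 • v1)
    (hv1'unit : v1' ⬝ᵥ v1' = 1) (hv1'eig : M' *ᵥ v1' = eigDesc hM' 0 • v1') :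
    opNorm (Matrix.vecMulVec v1 v1 - Matrix.vecMulVec v1' v1')
      ≤ 2 * opNorm (M - M') / γ := by
  have hn0 : 0 < n := by omega
  set l1 := eigDesc hM 0 with hl1
  set l2 := eigDesc hM 1 with hl2
  set l1' := eigDesc hM' 0 with hl1'
  set ε := opNorm (M - M') with hεdef
  have hε0 : 0 ≤ ε := norm_nonneg _
  set c := v1 ⬝ᵥ v1' with hc
  set w := v1' - c • v1 with hw
  have hv1'w : v1' = c • v1 + w := by rw [hw]; abel
  have hwv1 : w ⬝ᵥ v1 = 0 := by
    simp only [hw, sub_dotProduct, smul_dotProduct, smul_eq_mul, hv1unit,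
      dotProduct_comm v1' v1, ← hc]
    ring
  have hv1w : v1 ⬝ᵥ w = 0 := by rw [dotProduct_comm]; exact hwv1
  have hwv1' : w ⬝ᵥ v1' = 1 - c ^ 2 := by
    simp only [hw, sub_dotProduct, smul_dotProduct, smul_eq_mul, hv1'unit, ← hc]
    ring
  have hww : w ⬝ᵥ w = 1 - c ^ 2 := by
    simp only [hw, sub_dotProduct, dotProduct_sub, smul_dotProduct,
      dotProduct_smul, smul_eq_mul, hv1unit, hv1'unit,
      dotProduct_comm v1' v1, ← hc]
    ring
  have hww0 : 0 ≤ 1 - c ^ 2 := by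
    rw [← hww, ← normsq_toEu]; positivity
  set s := Real.sqrt (1 - c ^ 2) with hsdef
  have hs2 : s ^ 2 = 1 - c ^ 2 := Real.sq_sqrt hww0
  have hsnn : 0 ≤ s := Real.sqrt_nonneg _
  have hs1 : s ≤ 1 := by nlinarith [sq_nonneg (s - 1), sq_nonneg c]
  have hnormw : ‖toEu w‖ = s := by
    rw [hsdef, ← hww, ← normsq_toEu, Real.sqrt_sq (norm_nonneg _)]
  have hnormv1 : ‖toEu v1‖ = 1 := by
    rw [← Real.sqrt_sq (norm_nonneg (toEu v1)), normsq_toEu, hv1unit, Real.sqrt_one]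
  have hnormv1' : ‖toEu v1'‖ = 1 := by
    rw [← Real.sqrt_sq (norm_nonneg (toEu v1')), normsq_toEu, hv1'unit, Real.sqrt_one]
  -- Step A : the projector difference has norm at most s
  have hPP : opNorm (Matrix.vecMulVec v1 v1 - Matrix.vecMulVec v1' v1') ≤ s := by
    refine opNorm_le_of _ hsnn fun x => ?_
    have hmv : (Matrix.vecMulVec v1 v1 - Matrix.vecMulVec v1' v1') *ᵥ x
        = (v1 ⬝ᵥ x) • v1 - (v1' ⬝ᵥ x) • v1' := by
      rw [Matrix.sub_mulVec, vecMulVec_mulVec', vecMulVec_mulVec']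
    set a := v1 ⬝ᵥ x with ha
    set bb := v1' ⬝ᵥ x with hbb
    set t := w ⬝ᵥ x with ht
    have htab : t = bb - c * a := by
      simp only [ht, hw, sub_dotProduct, smul_dotProduct, smul_eq_mul, ← ha, ← hbb]
    have hL : ‖toEu ((Matrix.vecMulVec v1 v1 - Matrix.vecMulVec v1' v1') *ᵥ x)‖ ^ 2
        = a ^ 2 + bb ^ 2 - 2 * a * bb * c := by
      rw [normsq_toEu, hmv]
      simp only [sub_dotProduct, dotProduct_sub, smul_dotProduct,
        dotProduct_smul, smul_eq_mul, hv1unit, hv1'unit,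
        dotProduct_comm v1' v1, ← hc]
      ring
    have hCS := real_inner_mul_inner_self_le (toEu w) (toEu (x - a • v1))
    rw [inner_toEu, inner_toEu, inner_toEu] at hCS
    have hwy : w ⬝ᵥ (x - a • v1) = t := by
      simp only [dotProduct_sub, dotProduct_smul, smul_eq_mul, hwv1, ← ht]
      ring
    have hyy : (x - a • v1) ⬝ᵥ (x - a • v1) = x ⬝ᵥ x - a ^ 2 := by
      simp only [sub_dotProduct, dotProduct_sub, smul_dotProduct,
        dotProduct_smul, smul_eq_mul, hv1unit, dotProduct_comm x v1, ← ha]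
      ring
    rw [hwy, hyy, hww] at hCS
    have key : ‖toEu ((Matrix.vecMulVec v1 v1 - Matrix.vecMulVec v1' v1') *ᵥ x)‖ ^ 2
        ≤ (s * ‖toEu x‖) ^ 2 := by
      rw [hL, mul_pow, hs2, normsq_toEu]
      have e : a ^ 2 + bb ^ 2 - 2 * a * bb * c = (1 - c ^ 2) * a ^ 2 + t ^ 2 := by
        rw [htab]; ring
      rw [e]
      nlinarith [hCS]
    exact le_of_pow_le_pow_left₀ two_ne_zero (by positivity) key
  -- Step B : Weyl-type bound  l1 - ε ≤ l1'
  have hB : l1 - ε ≤ l1' := by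
    have h1 : v1 ⬝ᵥ (M' *ᵥ v1) ≤ l1' * (v1 ⬝ᵥ v1) := rayleigh_le_max hn0 hM' v1
    rw [hv1unit, mul_one] at h1
    have h2 : v1 ⬝ᵥ (M *ᵥ v1) = l1 := by
      rw [hv1eig, dotProduct_smul, smul_eq_mul, hv1unit, mul_one]
    have habs := abs_real_inner_le_norm (toEu v1) (toEu ((M - M') *ᵥ v1))
    rw [inner_toEu, hnormv1, one_mul] at habs
    have h4 := opNorm_mulVec_le (M - M') v1
    rw [hnormv1, mul_one, ← hεdef] at h4
    have h3 : v1 ⬝ᵥ ((M - M') *ᵥ v1) ≤ ε :=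
      (le_abs_self _).trans (habs.trans h4)
    have h5 : v1 ⬝ᵥ ((M - M') *ᵥ v1) = v1 ⬝ᵥ (M *ᵥ v1) - v1 ⬝ᵥ (M' *ᵥ v1) := by
      rw [Matrix.sub_mulVec, dotProduct_sub]
    linarith
  -- Step C : (l1' - l2) (1 - c²) ≤ ε s
  have hwMv1' : w ⬝ᵥ (M' *ᵥ v1') = l1' * (1 - c ^ 2) := by
    rw [hv1'eig, dotProduct_smul, smul_eq_mul, hwv1']
  have hwMw : w ⬝ᵥ (M *ᵥ w) ≤ l2 * (1 - c ^ 2) := by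
    have h := rayleigh_le_second hn hM (by linarith) hv1unit hv1eig w hv1w
    rwa [hww] at h
  have hdecomp : w ⬝ᵥ (M *ᵥ v1') = w ⬝ᵥ (M *ᵥ w) := by
    conv_lhs => rw [hv1'w]
    rw [Matrix.mulVec_add, Matrix.mulVec_smul, dotProduct_add, dotProduct_smul,
      hv1eig, dotProduct_smul, hwv1]
    simp
  have habsw := abs_real_inner_le_norm (toEu w) (toEu ((M - M') *ᵥ v1'))
  rw [inner_toEu, hnormw] at habsw
  have h4' := opNorm_mulVec_le (M - M') v1'
  rw [hnormv1', mul_one, ← hεdef] at h4'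
  have habs2 : |w ⬝ᵥ ((M - M') *ᵥ v1')| ≤ ε * s := by
    calc |w ⬝ᵥ ((M - M') *ᵥ v1')| ≤ s * ‖toEu ((M - M') *ᵥ v1')‖ := habsw
      _ ≤ s * ε := mul_le_mul_of_nonneg_left h4' hsnn
      _ = ε * s := by ring
  have hwE : -(ε * s) ≤ w ⬝ᵥ ((M - M') *ᵥ v1') := by
    have := neg_abs_le (w ⬝ᵥ ((M - M') *ᵥ v1'))
    linarith
  have hsplit : w ⬝ᵥ (M' *ᵥ v1') = w ⬝ᵥ (M *ᵥ v1') - w ⬝ᵥ ((M - M') *ᵥ v1') := by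
    rw [Matrix.sub_mulVec, dotProduct_sub]
    ring
  have hC : l1' * (1 - c ^ 2) ≤ l2 * (1 - c ^ 2) + ε * s := by
    rw [← hwMv1', hsplit, hdecomp]
    linarith
  -- Step D : combine
  rcases le_or_gt (γ / 2) ε with hcase | hcase
  · have h1 : (1 : ℝ) ≤ 2 * ε / γ := by
      rw [le_div_iff₀ hγ]; linarith
    linarith
  · have hgap2 : γ / 2 ≤ l1' - l2 := by linarith
    have hkey : γ / 2 * s ^ 2 ≤ ε * s := by
      have h6 : γ / 2 * (1 - c ^ 2) ≤ (l1' - l2) * (1 - c ^ 2) :=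
        mul_le_mul_of_nonneg_right hgap2 hww0
      rw [hs2]
      linarith [hC, h6]
    have hsle : s ≤ 2 * ε / γ := by
      rcases eq_or_lt_of_le hsnn with h0 | h0
      · rw [← h0]; positivity
      · rw [le_div_iff₀ hγ]
        have h7 : (γ / 2 * s) * s ≤ ε * s := by
          have h8 : (γ / 2 * s) * s = γ / 2 * s ^ 2 := by ring
          rw [h8]; exact hkey
        have h9 := le_of_mul_le_mul_right h7 h0
        linarith
    linarith
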